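/- Let H be a d×d complex Hermitian matrix, let E ∈ ℝ, let Π be an orthogonal projection matrix (Π = Π* = Π²) commuting with H and satisfying ΠHΠ ⪯ E·Π, let σ be a d×d positive semidefinite Hermitian matrix, and let β ≥ 0. Then tr(e^{−βH} Π e^{−βH} σ) ≥ e^{−2βE} · tr(Π σ). -/

import Mathlib

open Matrix
open scoped ComplexOrder

/-- The matrix exponential of a complex square matrix. -/
noncomputable def mexp {d : ℕ} (A : Matrix (Fin d) (Fin d) ℂ) : Matrix (Fin d) (Fin d) ℂ :=
  NormedSpace.exp A

section Aux

variable {d : ℕ}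

lemma mexp_commute {A B : Matrix (Fin d) (Fin d) ℂ} (h : A * B = B * A) :
    mexp A * B = B * mexp A := by
  letI : SeminormedRing (Matrix (Fin d) (Fin d) ℂ) := Matrix.linftyOpSemiNormedRing
  letI : NormedRing (Matrix (Fin d) (Fin d) ℂ) := Matrix.linftyOpNormedRing
  letI : NormedAlgebra ℂ (Matrix (Fin d) (Fin d) ℂ) := Matrix.linftyOpNormedAlgebra
  exact Commute.exp_left h

lemma mexp_add_of_commute {A B : Matrix (Fin d) (Fin d) ℂ} (h : Commute A B) :
    mexp (A + B) = mexp A * mexp B :=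
  Matrix.exp_add_of_commute A B h

lemma psd_smul {M : Matrix (Fin d) (Fin d) ℂ} (hM : M.PosSemidef) {c : ℝ} (hc : 0 ≤ c) :
    ((c : ℂ) • M).PosSemidef := by
  exact hM.smul (Complex.zero_le_real.mpr hc)

lemma psd_trace_mul_re_nonneg {A B : Matrix (Fin d) (Fin d) ℂ}
    (hA : A.PosSemidef) (hB : B.PosSemidef) : 0 ≤ (A * B).trace.re := by
  obtain ⟨C, rfl⟩ : ∃ C : Matrix (Fin d) (Fin d) ℂ, A = Cᴴ * C := by
    classical
    open scoped MatrixOrder in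
    obtain ⟨X, hX, -, hXX⟩ :=
      CFC.exists_sqrt_of_isSelfAdjoint_of_quasispectrumRestricts hA.isHermitian
        (QuasispectrumRestricts.nnreal_of_nonneg hA.nonneg)
    refine ⟨X, ?_⟩
    rw [← hXX, ← Matrix.star_eq_conjTranspose, hX.star_eq]
  have h1 : (Cᴴ * C * B).trace = (C * B * Cᴴ).trace := (trace_mul_cycle C B Cᴴ).symm
  rw [h1]
  have h2 : (C * B * Cᴴ).PosSemidef := hB.mul_mul_conjTranspose_same C
  have h3 : (0 : ℂ) ≤ (C * B * Cᴴ).trace := h2.trace_nonneg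
  exact (Complex.le_def.mp h3).1

/-- spectral form of the exponential of a real multiple of a Hermitian matrix -/
lemma mexp_real_smul_spectral {H : Matrix (Fin d) (Fin d) ℂ} (hH : H.IsHermitian) (c : ℝ) :
    mexp ((c : ℂ) • H) = (hH.eigenvectorUnitary : Matrix (Fin d) (Fin d) ℂ) *
      diagonal (fun i => (Real.exp (c * hH.eigenvalues i) : ℂ)) *
      (hH.eigenvectorUnitary : Matrix (Fin d) (Fin d) ℂ)ᴴ := by
  set U : Matrix (Fin d) (Fin d) ℂ := (hH.eigenvectorUnitary : Matrix (Fin d) (Fin d) ℂ) with hU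
  have hUU : U * star U = 1 := (Matrix.mem_unitaryGroup_iff).mp hH.eigenvectorUnitary.2
  have hstar : star U = Uᴴ := rfl
  have hUinv : U⁻¹ = Uᴴ := Matrix.inv_eq_right_inv (hstar ▸ hUU)
  have hUunit : IsUnit U := ⟨Unitary.toUnits hH.eigenvectorUnitary, rfl⟩
  calc mexp ((c : ℂ) • H)
      = mexp (U * ((c : ℂ) • diagonal (RCLike.ofReal ∘ hH.eigenvalues)) * U⁻¹) := by
        rw [hUinv]
        congr 1
        conv_lhs => rw [hH.spectral_theorem]
        rw [Matrix.mul_smul, Matrix.smul_mul]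
        rfl
    _ = U * mexp ((c : ℂ) • diagonal (RCLike.ofReal ∘ hH.eigenvalues)) * U⁻¹ :=
        Matrix.exp_conj U _ hUunit
    _ = U * diagonal (fun i => (Real.exp (c * hH.eigenvalues i) : ℂ)) * Uᴴ := by
        rw [hUinv]
        congr 2
        have hdiag : (c : ℂ) • diagonal (RCLike.ofReal ∘ hH.eigenvalues)
            = diagonal (fun i => ((c * hH.eigenvalues i : ℝ) : ℂ)) := by
          ext i j
          rcases eq_or_ne i j with rfl | hij
          · simp only [Matrix.smul_apply, Matrix.diagonal_apply_eq, Function.comp_apply,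
              smul_eq_mul]
            have hco : (RCLike.ofReal : ℝ → ℂ) = Complex.ofReal := rfl
            rw [hco]
            push_cast
            ring
          · simp [Matrix.smul_apply, Matrix.diagonal_apply_ne _ hij]
        rw [hdiag]
        show NormedSpace.exp _ = _
        have hexp : NormedSpace.exp (fun i => ((c * hH.eigenvalues i : ℝ) : ℂ))
            = fun i => (Real.exp (c * hH.eigenvalues i) : ℂ) := by
          rw [Pi.exp_def]
          funext i
          rw [← Complex.exp_eq_exp_ℂ, Complex.ofReal_exp]
        rw [Matrix.exp_diagonal, hexp]

end Aux

/-- If `P` is an orthogonal projection commuting with the Hermitian matrix `H`, with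
`PHP ⪯ E·P`, then for any positive semidefinite `σ` and `β ≥ 0`,
`tr(e^{−βH} P e^{−βH} σ) ≥ e^{−2βE}·tr(Pσ)`. -/
theorem trace_exp_proj_exp_ge {d : ℕ} (H P σ : Matrix (Fin d) (Fin d) ℂ)
    (hH : H.IsHermitian) (E : ℝ)
    (hPherm : P = Pᴴ) (hPidem : P = P * P) (hcomm : P * H = H * P)
    (hPHE : ((E : ℂ) • P - P * H * P).PosSemidef)
    (hσ : σ.PosSemidef) (β : ℝ) (hβ : 0 ≤ β) :
    Real.exp (-2 * β * E) * (P * σ).trace.re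
      ≤ (mexp (-((β : ℂ) • H)) * P * mexp (-((β : ℂ) • H)) * σ).trace.re := by
  classical
  set U : Matrix (Fin d) (Fin d) ℂ := (hH.eigenvectorUnitary : Matrix (Fin d) (Fin d) ℂ) with hU
  have ev : Fin d → ℝ := hH.eigenvalues
  set e' : ℝ := Real.exp (-2 * β * E) with he'
  have he'pos : 0 < e' := Real.exp_pos _
  have hX : -((β : ℂ) • H) = ((-β : ℝ) : ℂ) • H := by push_cast; rw [neg_smul]
  have hcommH : (((-β : ℝ) : ℂ) • H) * P = P * (((-β : ℝ) : ℂ) • H) := by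
    rw [smul_mul_assoc, mul_smul_comm, hcomm]
  have hcommH2 : (((-2 * β : ℝ) : ℂ) • H) * P = P * (((-2 * β : ℝ) : ℂ) • H) := by
    rw [smul_mul_assoc, mul_smul_comm, hcomm]
  set M : Matrix (Fin d) (Fin d) ℂ := mexp (((-2 * β : ℝ) : ℂ) • H) with hM
  have hPe : mexp (-((β : ℂ) • H)) * P = P * mexp (-((β : ℂ) • H)) := by
    rw [hX]; exact mexp_commute hcommH
  have hMP : M * P = P * M := mexp_commute hcommH2
  have hEE : mexp (-((β : ℂ) • H)) * mexp (-((β : ℂ) • H)) = M := by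
    rw [hX, hM, ← mexp_add_of_commute (Commute.refl _), ← add_smul]
    congr 2
    push_cast
    ring
  have hPMP : P * M * P = P * M := by
    rw [mul_assoc, hMP, ← mul_assoc, ← hPidem]
  have hrew : mexp (-((β : ℂ) • H)) * P * mexp (-((β : ℂ) • H)) * σ = (P * M * P) * σ := by
    rw [hPe, mul_assoc P, hEE, hPMP]
  -- positivity of the key matrix
  set g : Fin d → ℝ := fun i => Real.exp (-2 * β * hH.eigenvalues i) - e'
      + 2 * β * e' * hH.eigenvalues i - 2 * β * e' * E with hg
  have hgpos : ∀ i, 0 ≤ g i := by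
    intro i
    have h1 : (-2 * β * (hH.eigenvalues i - E)) + 1 ≤ Real.exp (-2 * β * (hH.eigenvalues i - E)) :=
      Real.add_one_le_exp _
    have h2 : Real.exp (-2 * β * hH.eigenvalues i)
        = e' * Real.exp (-2 * β * (hH.eigenvalues i - E)) := by
      rw [he', ← Real.exp_add]; ring_nf
    rw [hg]
    simp only
    nlinarith [mul_le_mul_of_nonneg_left h1 he'pos.le]
  set N : Matrix (Fin d) (Fin d) ℂ :=
    M - (e' : ℂ) • (1 : Matrix (Fin d) (Fin d) ℂ) + ((2 * β * e' : ℝ) : ℂ) • H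
      - ((2 * β * e' * E : ℝ) : ℂ) • (1 : Matrix (Fin d) (Fin d) ℂ) with hN
  have hVV : (hH.eigenvectorUnitary : Matrix (Fin d) (Fin d) ℂ)
      * (hH.eigenvectorUnitary : Matrix (Fin d) (Fin d) ℂ)ᴴ = 1 :=
    (Matrix.mem_unitaryGroup_iff).mp hH.eigenvectorUnitary.2
  have hspec : H = (hH.eigenvectorUnitary : Matrix (Fin d) (Fin d) ℂ)
      * diagonal (RCLike.ofReal ∘ hH.eigenvalues)
      * (hH.eigenvectorUnitary : Matrix (Fin d) (Fin d) ℂ)ᴴ := hH.spectral_theorem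
  have hNspec : N = (hH.eigenvectorUnitary : Matrix (Fin d) (Fin d) ℂ)
      * diagonal (fun i => ((g i : ℝ) : ℂ))
      * (hH.eigenvectorUnitary : Matrix (Fin d) (Fin d) ℂ)ᴴ := by
    have hDg : diagonal (fun i => ((g i : ℝ) : ℂ))
        = diagonal (fun i => (Real.exp (-2 * β * hH.eigenvalues i) : ℂ))
          - (e' : ℂ) • (1 : Matrix (Fin d) (Fin d) ℂ)
          + ((2 * β * e' : ℝ) : ℂ) • diagonal (RCLike.ofReal ∘ hH.eigenvalues)
          - ((2 * β * e' * E : ℝ) : ℂ) • (1 : Matrix (Fin d) (Fin d) ℂ) := by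
      ext i j
      rcases eq_or_ne i j with rfl | hij
      · simp only [Matrix.diagonal_apply_eq, Matrix.sub_apply, Matrix.add_apply,
          Matrix.smul_apply, Matrix.one_apply_eq, Function.comp_apply, smul_eq_mul, hg]
        have hco : (RCLike.ofReal : ℝ → ℂ) = Complex.ofReal := rfl
        rw [hco]
        push_cast
        ring
      · simp [Matrix.diagonal_apply_ne _ hij, Matrix.one_apply_ne hij]
    symm
    rw [hDg]
    simp only [Matrix.mul_sub, Matrix.sub_mul, Matrix.mul_add, Matrix.add_mul,
      Matrix.mul_smul, Matrix.smul_mul, Matrix.mul_one]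
    rw [hVV, ← mexp_real_smul_spectral hH (-2 * β), ← hspec, hN, hM]
  have hNpsd : N.PosSemidef := by
    rw [hNspec]
    refine (Matrix.PosSemidef.diagonal ?_).mul_mul_conjTranspose_same U
    intro i
    exact Complex.zero_le_real.mpr (hgpos i)
  have hPNP : (P * N * P).PosSemidef := by
    have := hNpsd.mul_mul_conjTranspose_same P
    rwa [← hPherm] at this
  have hpart2 : (((2 * β * e' : ℝ) : ℂ) • ((E : ℂ) • P - P * H * P)).PosSemidef :=
    psd_smul hPHE (by positivity)
  have heq : P * M * P - (e' : ℂ) • P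
      = P * N * P + ((2 * β * e' : ℝ) : ℂ) • ((E : ℂ) • P - P * H * P) := by
    have hP1 : P * ((1 : Matrix (Fin d) (Fin d) ℂ)) * P = P := by
      rw [Matrix.mul_one, ← hPidem]
    rw [hN]
    simp only [Matrix.mul_sub, Matrix.sub_mul, Matrix.mul_add, Matrix.add_mul,
      Matrix.mul_smul, Matrix.smul_mul, hP1, smul_sub, smul_smul]
    push_cast
    module
  have hKpsd : (P * M * P - (e' : ℂ) • P).PosSemidef := by
    rw [heq]; exact hPNP.add hpart2
  -- trace computation
  have htr : ((P * M * P) * σ).trace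
      = ((P * M * P - (e' : ℂ) • P) * σ).trace + (e' : ℂ) * (P * σ).trace := by
    rw [Matrix.sub_mul, Matrix.trace_sub, Matrix.smul_mul, Matrix.trace_smul, smul_eq_mul]
    ring
  rw [hrew, htr]
  have h0 := psd_trace_mul_re_nonneg hKpsd hσ
  rw [Complex.add_re, Complex.re_ofReal_mul]
  linarith
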